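/- Let H be a symmetric positive definite n×n real matrix, φ > 0, and A an n×n real matrix satisfying H A + Aᵀ H ⪯ −2φ H (in the sense of symmetric matrices). Then for all t ≥ 0 and all v ∈ ℝⁿ, ‖e^{At} v‖ ≤ √(cond(H)) e^{−φ t} ‖v‖, where cond(H) = ‖H‖·‖H⁻¹‖ is the condition number of H in the operator 2-norm. -/

import Mathlib

open scoped Matrix

attribute [local instance] Matrix.linftyOpNormedRing Matrix.linftyOpNormedAlgebra

/-- The operator 2-norm of a real matrix, via its action on Euclidean space. -/
noncomputable def opNorm2 {n : ℕ} (M : Matrix (Fin n) (Fin n) ℝ) : ℝ :=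
  ‖Matrix.toEuclideanCLM (𝕜 := ℝ) M‖

open scoped RealInnerProductSpace in
open scoped MatrixOrder in
set_option maxHeartbeats 1000000 in
/-- If `H A + Aᵀ H ⪯ -2φ H` with `H` symmetric positive definite and `φ > 0`, then
`‖e^{At} v‖ ≤ √(cond H) e^{-φt} ‖v‖` for all `t ≥ 0`, where `cond H = ‖H‖ ‖H⁻¹‖`. -/
theorem stmt6 {n : ℕ} (H A : Matrix (Fin n) (Fin n) ℝ) (hH : H.PosDef)
    {φ : ℝ} (hφ : 0 < φ)
    (hLoewner : (-(H * A + Aᵀ * H + (2 * φ) • H)).PosSemidef) :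
    ∀ t : ℝ, 0 ≤ t → ∀ v : EuclideanSpace ℝ (Fin n),
      ‖Matrix.toEuclideanCLM (𝕜 := ℝ) (NormedSpace.exp (t • A)) v‖ ≤
        Real.sqrt (opNorm2 H * opNorm2 H⁻¹) * Real.exp (-φ * t) * ‖v‖ := by
  intro t ht v
  set T := Matrix.toEuclideanCLM (𝕜 := ℝ) (n := Fin n) with hTdef
  -- inner product formula
  have inner_T : ∀ (M : Matrix (Fin n) (Fin n) ℝ) (y z : EuclideanSpace ℝ (Fin n)),
      ⟪y, T M z⟫ = dotProduct (star (WithLp.equiv 2 _ y))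
        (M *ᵥ (WithLp.equiv 2 _ z)) := by
    intro M y z
    simp [hTdef, PiLp.inner_apply, dotProduct, Matrix.ofLp_toEuclideanCLM, mul_comm]
  -- the evolution
  set x : ℝ → EuclideanSpace ℝ (Fin n) := fun s => T (NormedSpace.exp (s • A)) v with hxdef
  have hx0 : x 0 = v := by
    simp [hxdef, NormedSpace.exp_zero]
  -- the linear evaluation map
  let L : Matrix (Fin n) (Fin n) ℝ →L[ℝ] EuclideanSpace ℝ (Fin n) :=
    LinearMap.toContinuousLinearMap
      { toFun := fun M => T M v
        map_add' := by intro a b; simp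
        map_smul' := by intro c a; simp }
  have hLapp : ∀ M, L M = T M v := fun _ => rfl
  have hx : ∀ s : ℝ, HasDerivAt x (T A (x s)) s := by
    intro s
    have h1 : HasDerivAt (fun u : ℝ => NormedSpace.exp (u • A))
        (A * NormedSpace.exp (s • A)) s := hasDerivAt_exp_smul_const' A s
    have h2 := L.hasFDerivAt.comp_hasDerivAt s h1
    have : L (A * NormedSpace.exp (s • A)) = T A (x s) := by
      rw [hLapp, map_mul]; rfl
    rw [← this]
    exact h2
  -- the Lyapunov function
  set f : ℝ → ℝ := fun s => ⟪x s, T H (x s)⟫ with hfdef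
  have hf : ∀ s : ℝ, HasDerivAt f
      (⟪x s, T H (T A (x s))⟫ + ⟪T A (x s), T H (x s)⟫) s := by
    intro s
    exact (hx s).inner ℝ (((T H).hasFDerivAt.comp_hasDerivAt s (hx s)))
  -- the key differential inequality
  have key : ∀ y : EuclideanSpace ℝ (Fin n),
      ⟪y, T H (T A y)⟫ + ⟪T A y, T H y⟫ ≤ -(2 * φ) * ⟪y, T H y⟫ := by
    intro y
    have hadj : ⟪T A y, T H y⟫ = ⟪y, T (Aᵀ * H) y⟫ := by
      have : T (Aᵀ) = star (T A) := by
        rw [← map_star]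
        congr 1
      rw [map_mul]
      rw [ContinuousLinearMap.mul_apply, this, ContinuousLinearMap.star_eq_adjoint,
        ContinuousLinearMap.adjoint_inner_right]
    have hmul : ⟪y, T H (T A y)⟫ = ⟪y, T (H * A) y⟫ := by rw [map_mul]; rfl
    have hpos := hLoewner.dotProduct_mulVec_nonneg (WithLp.equiv 2 _ y)
    rw [hadj, hmul]
    have hsum : ⟪y, T (H * A) y⟫ + ⟪y, T (Aᵀ * H) y⟫ + (2 * φ) * ⟪y, T H y⟫
        = ⟪y, T (H * A + Aᵀ * H + (2 * φ) • H) y⟫ := by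
      rw [map_add, map_add, map_smul]
      simp [inner_add_right, inner_smul_right]
    have hle : 0 ≤ ⟪y, T (-(H * A + Aᵀ * H + (2 * φ) • H)) y⟫ := by
      rw [inner_T]; exact hpos
    rw [map_neg, ContinuousLinearMap.neg_apply, inner_neg_right] at hle
    linarith [hsum, hle]
  -- Gronwall via antitonicity
  set F : ℝ → ℝ := fun s => Real.exp (2 * φ * s) * f s with hFdef
  have hF : ∀ s : ℝ, HasDerivAt F
      (Real.exp (2 * φ * s) * (2 * φ) * f s +
        Real.exp (2 * φ * s) * (⟪x s, T H (T A (x s))⟫ + ⟪T A (x s), T H (x s)⟫)) s := by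
    intro s
    have h1 : HasDerivAt (fun u : ℝ => Real.exp (2 * φ * u))
        (Real.exp (2 * φ * s) * (2 * φ)) s := by
      have := ((hasDerivAt_id s).const_mul (2 * φ)).exp
      simpa [mul_comm] using this
    exact h1.mul (hf s)
  have hFanti : Antitone F := by
    apply antitone_of_deriv_nonpos
    · intro s; exact (hF s).differentiableAt
    · intro s
      rw [(hF s).deriv]
      have h1 := key (x s)
      have h2 : (0 : ℝ) < Real.exp (2 * φ * s) := Real.exp_pos _
      nlinarith [h2.le]
  have h2 : (0 : ℝ) < Real.exp (2 * φ * t) := Real.exp_pos _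
  have hft : f t ≤ Real.exp (-(2 * φ) * t) * f 0 := by
    have h := hFanti ht
    simp only [hFdef, mul_zero, Real.exp_zero, one_mul] at h
    have h3 : Real.exp (-(2 * φ) * t) = (Real.exp (2 * φ * t))⁻¹ := by
      rw [← Real.exp_neg]; ring_nf
    calc f t = (Real.exp (2 * φ * t))⁻¹ * (Real.exp (2 * φ * t) * f t) := by field_simp
      _ ≤ (Real.exp (2 * φ * t))⁻¹ * f 0 :=
        mul_le_mul_of_nonneg_left h (by positivity)
      _ = Real.exp (-(2 * φ) * t) * f 0 := by rw [h3]
  -- the square root of H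
  set S := CFC.sqrt H with hSdef
  have hSsq : S * S = H := CFC.sqrt_mul_sqrt_self H hH.posSemidef.nonneg
  have hSherm : Sᴴ = S := (Matrix.nonneg_iff_posSemidef.mp (CFC.sqrt_nonneg H)).1
  have hSdet : S.det ≠ 0 := by
    intro h0
    have : H.det = 0 := by rw [← hSsq, Matrix.det_mul, h0, mul_zero]
    exact (hH.det_pos.ne') this
  have hSinv : S⁻¹ * S = 1 := Matrix.nonsing_inv_mul S (Ne.isUnit hSdet)
  have hSinvherm : (S⁻¹)ᴴ = S⁻¹ := by
    rw [Matrix.conjTranspose_nonsing_inv, hSherm]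
  have hHinv : S⁻¹ * S⁻¹ = H⁻¹ := by
    rw [← Matrix.mul_inv_rev, hSsq]
  -- star facts
  have hstarS : star (T S) = T S := by
    rw [← map_star, Matrix.star_eq_conjTranspose, hSherm]
  have hstarSinv : star (T S⁻¹) = T S⁻¹ := by
    rw [← map_star, Matrix.star_eq_conjTranspose, hSinvherm]
  -- f as a squared norm
  have hfval : ∀ y : EuclideanSpace ℝ (Fin n), ⟪y, T H y⟫ = ‖T S y‖ ^ 2 := by
    intro y
    rw [← hSsq, map_mul, ContinuousLinearMap.mul_apply]
    have hTT : (⟪y, T S (T S y)⟫ : ℝ) = ⟪T S y, T S y⟫ := by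
      nth_rewrite 1 [show T S = ContinuousLinearMap.adjoint (T S) by
        rw [← ContinuousLinearMap.star_eq_adjoint, hstarS]]
      exact ContinuousLinearMap.adjoint_inner_right _ _ _
    rw [hTT, real_inner_self_eq_norm_sq]
  -- relation of norms to opNorm2
  have hnormS : ‖T S‖ ^ 2 = opNorm2 H := by
    rw [sq, ← CStarRing.norm_star_mul_self (x := T S), hstarS, ← map_mul, hSsq]
    rfl
  have hnormSinv : ‖T S⁻¹‖ ^ 2 = opNorm2 H⁻¹ := by
    rw [sq, ← CStarRing.norm_star_mul_self (x := T S⁻¹), hstarSinv, ← map_mul, hHinv]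
    rfl
  -- bound on ‖x t‖
  have hxt : ‖x t‖ ≤ ‖T S⁻¹‖ * ‖T S (x t)‖ := by
    have : x t = T S⁻¹ (T S (x t)) := by
      rw [← ContinuousLinearMap.mul_apply, ← map_mul, hSinv, map_one,
        ContinuousLinearMap.one_apply]
    conv_lhs => rw [this]
    exact (T S⁻¹).le_opNorm _
  have hTSxt : ‖T S (x t)‖ ≤ Real.exp (-φ * t) * ‖T S v‖ := by
    have h1 : ‖T S (x t)‖ ^ 2 ≤ (Real.exp (-φ * t) * ‖T S v‖) ^ 2 := by
      have e1 : f t = ‖T S (x t)‖ ^ 2 := hfval (x t)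
      have e2 : f 0 = ‖T S v‖ ^ 2 := by
        rw [hfdef]; simp only [hx0]; exact hfval v
      have e3 : (Real.exp (-φ * t) * ‖T S v‖) ^ 2
          = Real.exp (-(2 * φ) * t) * ‖T S v‖ ^ 2 := by
        rw [mul_pow, ← Real.exp_nat_mul]; ring_nf
      rw [e3, ← e2, ← e1]
      exact hft
    have := Real.sqrt_le_sqrt h1
    rwa [Real.sqrt_sq (norm_nonneg _), Real.sqrt_sq (by positivity)] at this
  have hTSv : ‖T S v‖ ≤ ‖T S‖ * ‖v‖ := (T S).le_opNorm v
  -- assemble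
  have hsqrt : Real.sqrt (opNorm2 H * opNorm2 H⁻¹) = ‖T S‖ * ‖T S⁻¹‖ := by
    rw [← hnormS, ← hnormSinv, ← mul_pow, Real.sqrt_sq (by positivity)]
  show ‖x t‖ ≤ _
  rw [hsqrt]
  calc ‖x t‖ ≤ ‖T S⁻¹‖ * ‖T S (x t)‖ := hxt
    _ ≤ ‖T S⁻¹‖ * (Real.exp (-φ * t) * ‖T S v‖) :=
        mul_le_mul_of_nonneg_left hTSxt (norm_nonneg _)
    _ ≤ ‖T S⁻¹‖ * (Real.exp (-φ * t) * (‖T S‖ * ‖v‖)) := by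
        apply mul_le_mul_of_nonneg_left _ (norm_nonneg _)
        exact mul_le_mul_of_nonneg_left hTSv (Real.exp_pos _).le
    _ = ‖T S‖ * ‖T S⁻¹‖ * Real.exp (-φ * t) * ‖v‖ := by ring
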